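/- arXiv:2205.06005 — 5 statements merged into one kernel-verified Lean document; each statement's English description precedes it below -/
import Mathlib

section
/- Let p ≥ 2 and k ∈ ℕ, k ≥ 1. Define θ_k : ℝ → ℝ by θ_k(ζ) = |ζ|^p for |ζ| ≤ k, and θ_k(ζ) = k^{p-2}·[ (p(p-1)/2)·ζ² - p(p-2)·k·|ζ| + ((p-1)(p-2)/2)·k² ] for |ζ| > k. Then θ_k is C¹ on ℝ and for all ζ ∈ ℝ one has |ζ·θ_k'(ζ)| ≤ p·θ_k(ζ). -/
open Real

/-- The quadratic-growth truncation `θ_k` of `ζ ↦ |ζ|^p` is `C¹` and satisfies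
`|ζ θ_k'(ζ)| ≤ p θ_k(ζ)`. -/
theorem truncation_C1_and_first_deriv_bound (p : ℝ) (hp : 2 ≤ p) (k : ℕ) (hk : 1 ≤ k)
    (θ : ℝ → ℝ)
    (hθ₁ : ∀ ζ : ℝ, |ζ| ≤ (k : ℝ) → θ ζ = |ζ| ^ p)
    (hθ₂ : ∀ ζ : ℝ, (k : ℝ) < |ζ| →
      θ ζ = (k : ℝ) ^ (p - 2) *
        (p * (p - 1) / 2 * ζ ^ 2 - p * (p - 2) * (k : ℝ) * |ζ|
          + (p - 1) * (p - 2) / 2 * (k : ℝ) ^ 2)) :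
    ContDiff ℝ 1 θ ∧ ∀ ζ : ℝ, |ζ * deriv θ ζ| ≤ p * θ ζ := by
  set K : ℝ := (k : ℝ) with hKdef
  have hK1 : (1 : ℝ) ≤ K := by rw [hKdef]; exact_mod_cast hk
  have hK0 : (0 : ℝ) < K := by linarith
  -- basic rpow identities
  have hsq : ∀ x q : ℝ, (x ^ 2) ^ q = |x| ^ (2 * q) := by
    intro x q
    rw [← sq_abs, ← Real.rpow_natCast |x| 2, ← Real.rpow_mul (abs_nonneg x)]
    norm_num
  have habs : ∀ x : ℝ, |x| ^ p = (x ^ 2) ^ (p / 2) := by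
    intro x
    rw [hsq x (p / 2), show 2 * (p / 2) = p by ring]
  have hKp : K ^ (p - 2) * K ^ 2 = K ^ p := by
    rw [← Real.rpow_natCast K 2, ← Real.rpow_add hK0]
    norm_num
  have hKp1 : K ^ (p - 1) = K ^ (p - 2) * K := by
    rw [show p - 1 = p - 2 + 1 by ring, Real.rpow_add hK0, Real.rpow_one]
  -- the candidate derivative
  set φ : ℝ → ℝ := fun ζ =>
    p * (min |ζ| K) ^ (p - 2) * ((p - 1) * ζ - (p - 2) * max (-K) (min ζ K)) with hφdef
  -- quadratic piece
  set A : ℝ := K ^ (p - 2) * (p * (p - 1) / 2) with hAdef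
  set B : ℝ := -(K ^ (p - 2) * (p * (p - 2) * K)) with hBdef
  set C : ℝ := K ^ (p - 2) * ((p - 1) * (p - 2) / 2 * K ^ 2) with hCdef
  have hθK : θ K = K ^ p := by
    rw [hθ₁ K (le_of_eq (abs_of_pos hK0)), abs_of_pos hK0]
  have hqK : A * K ^ 2 + B * K + C = K ^ p := by
    rw [← hKp, hAdef, hBdef, hCdef]; ring
  have hq : ∀ x : ℝ, HasDerivAt (fun y => A * y ^ 2 + B * y + C) (2 * A * x + B) x := by
    intro x
    have h1 : HasDerivAt (fun y : ℝ => y ^ 2) (2 * x) x := by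
      simpa using hasDerivAt_pow 2 x
    have := ((h1.const_mul A).add ((hasDerivAt_id x).const_mul B)).add_const C
    refine this.congr_deriv ?_
    ring
  have hqeq : ∀ x ∈ Set.Ici K, θ x = A * x ^ 2 + B * x + C := by
    intro x hx
    rcases eq_or_lt_of_le (Set.mem_Ici.mp hx) with rfl | hx'
    · rw [hθK, hqK]
    · rw [hθ₂ x (by rw [abs_of_pos (lt_trans hK0 hx')]; exact hx'),
        abs_of_pos (lt_trans hK0 hx'), hAdef, hBdef, hCdef]
      ring
  -- interior derivative of |x|^p
  have hF : ∀ x : ℝ, HasDerivAt (fun y : ℝ => (y ^ 2) ^ (p / 2)) (p * x * |x| ^ (p - 2)) x := by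
    intro x
    have h1 : HasDerivAt (fun y : ℝ => y ^ 2) (2 * x) x := by
      simpa using hasDerivAt_pow 2 x
    have h2 : x ^ 2 ≠ 0 ∨ 1 ≤ p / 2 := Or.inr (by linarith)
    have := h1.rpow_const h2
    convert this using 1
    rw [hsq x (p / 2 - 1), show 2 * (p / 2 - 1) = p - 2 by ring]
    ring
  -- derivative of θ at nonnegative points
  have key : ∀ ζ : ℝ, 0 ≤ ζ → HasDerivAt θ (φ ζ) ζ := by
    intro ζ hζ
    rcases lt_trichotomy ζ K with hlt | heq | hgt
    · -- interior case
      have habsζ : |ζ| < K := by rwa [abs_of_nonneg hζ]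
      have hev : θ =ᶠ[nhds ζ] fun x => (x ^ 2) ^ (p / 2) := by
        have hmem : {x : ℝ | |x| < K} ∈ nhds ζ :=
          (isOpen_lt continuous_abs continuous_const).mem_nhds habsζ
        filter_upwards [hmem] with x hx
        rw [hθ₁ x (le_of_lt hx), habs]
      have hφζ : φ ζ = p * ζ * |ζ| ^ (p - 2) := by
        simp only [hφdef]
        rw [min_eq_left habsζ.le, min_eq_left hlt.le, max_eq_right (by linarith : -K ≤ ζ)]
        ring
      rw [hφζ]
      exact (hF ζ).congr_of_eventuallyEq hev
    · -- boundary case ζ = K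
      subst heq
      have hleft : HasDerivWithinAt θ (p * K ^ (p - 1)) (Set.Iic K) K := by
        have hmem : Set.Ioi (0 : ℝ) ∈ nhdsWithin K (Set.Iic K) :=
          nhdsWithin_le_nhds (Ioi_mem_nhds hK0)
        have h₁ : ∀ᶠ x in nhdsWithin K (Set.Iic K), θ x = x ^ p := by
          filter_upwards [hmem, self_mem_nhdsWithin] with x hx0 hxK
          rw [hθ₁ x (by rw [abs_of_pos hx0]; exact hxK), abs_of_pos hx0]
        have hr : HasDerivAt (fun x : ℝ => x ^ p) (p * K ^ (p - 1)) K :=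
          Real.hasDerivAt_rpow_const (Or.inl (ne_of_gt hK0))
        exact hr.hasDerivWithinAt.congr_of_eventuallyEq h₁ hθK
      have hright : HasDerivWithinAt θ (p * K ^ (p - 1)) (Set.Ici K) K := by
        have := (hq K).hasDerivWithinAt.congr hqeq (hqeq K Set.self_mem_Ici)
        refine this.congr_deriv ?_
        rw [hKp1, hAdef, hBdef]
        ring
      have hu := hleft.union hright
      rw [Set.Iic_union_Ici] at hu
      have hder := hasDerivWithinAt_univ.mp hu
      have hφζ : φ K = p * K ^ (p - 1) := by
        simp only [hφdef]
        rw [abs_of_pos hK0, min_self, max_eq_right (by linarith : -K ≤ K), hKp1]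
        ring
      rwa [hφζ]
    · -- outer case
      have hev : θ =ᶠ[nhds ζ] fun x => A * x ^ 2 + B * x + C := by
        have hmem : Set.Ioi K ∈ nhds ζ := Ioi_mem_nhds hgt
        filter_upwards [hmem] with x hx
        exact hqeq x (Set.mem_Ici.mpr (le_of_lt (Set.mem_Ioi.mp hx)))
      have hφζ : φ ζ = 2 * A * ζ + B := by
        simp only [hφdef]
        rw [abs_of_nonneg hζ, min_eq_right hgt.le,
          max_eq_right (by linarith : -K ≤ K), hAdef, hBdef]
        ring
      rw [hφζ]
      exact (hq ζ).congr_of_eventuallyEq hev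
  -- evenness of θ, oddness of φ
  have heven : ∀ ζ : ℝ, θ (-ζ) = θ ζ := by
    intro ζ
    rcases le_or_gt |ζ| K with h | h
    · rw [hθ₁ (-ζ) (by rwa [abs_neg]), hθ₁ ζ h, abs_neg]
    · rw [hθ₂ (-ζ) (by rwa [abs_neg]), hθ₂ ζ h, abs_neg]
      ring
  have hodd : ∀ ζ : ℝ, φ (-ζ) = -φ ζ := by
    intro ζ
    simp only [hφdef, abs_neg]
    have hclamp : max (-K) (min (-ζ) K) = -max (-K) (min ζ K) := by
      simp only [min_def, max_def]
      split_ifs <;> linarith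
    rw [hclamp]
    ring
  -- derivative everywhere
  have hd : ∀ ζ : ℝ, HasDerivAt θ (φ ζ) ζ := by
    intro ζ
    rcases le_or_gt 0 ζ with h | h
    · exact key ζ h
    · have h1 := (key (-ζ) (by linarith)).comp ζ (hasDerivAt_neg ζ)
      have h2 : (θ ∘ fun x : ℝ => -x) = θ := funext fun x => heven x
      rw [h2] at h1
      refine h1.congr_deriv ?_
      rw [hodd]
      ring
  have hdθ : deriv θ = φ := funext fun ζ => (hd ζ).deriv
  -- continuity of φ
  have hφc : Continuous φ := by
    rw [hφdef]
    refine (continuous_const.mul ?_).mul ?_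
    · exact (Real.continuous_rpow_const (by linarith)).comp
        (continuous_abs.min continuous_const)
    · exact (continuous_const.mul continuous_id).sub
        (continuous_const.mul (continuous_const.max (continuous_id.min continuous_const)))
  refine ⟨contDiff_one_iff_deriv.mpr ⟨fun ζ => (hd ζ).differentiableAt,
    by rw [hdθ]; exact hφc⟩, ?_⟩
  -- the inequality
  intro ζ
  rw [hdθ]
  rcases le_or_gt |ζ| K with h | h
  · -- inner region
    rw [hθ₁ ζ h]
    have habs2 : |ζ| ^ (2 : ℕ) * |ζ| ^ (p - 2) = |ζ| ^ p := by
      rcases eq_or_ne ζ 0 with rfl | hne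
      · simp [Real.zero_rpow (show p ≠ 0 by linarith)]
      · rw [← Real.rpow_natCast |ζ| 2, ← Real.rpow_add (abs_pos.mpr hne)]
        norm_num
    have hζK := abs_le.mp h
    have hφζ : φ ζ = p * ζ * |ζ| ^ (p - 2) := by
      simp only [hφdef]
      rw [min_eq_left h, min_eq_left hζK.2, max_eq_right hζK.1]
      ring
    have h2 : ζ * φ ζ = p * |ζ| ^ p := by
      rw [hφζ, ← habs2, sq_abs]
      ring
    rw [h2, abs_of_nonneg (by positivity)]
  · -- outer region
    rw [hθ₂ ζ h]
    have ht : (0 : ℝ) ≤ K ^ (p - 2) := Real.rpow_nonneg hK0.le _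
    have hcζ : max (-K) (min ζ K) * ζ = K * |ζ| := by
      rcases le_or_gt 0 ζ with h0 | h0
      · have hKζ : K < ζ := by rwa [abs_of_nonneg h0] at h
        rw [min_eq_right hKζ.le, max_eq_right (by linarith : -K ≤ K), abs_of_nonneg h0]
      · have hζK : ζ < -K := by
          have h' := h; rw [abs_of_neg h0] at h'; linarith
        rw [min_eq_left (by linarith : ζ ≤ K), max_eq_left (by linarith : ζ ≤ -K),
          abs_of_neg h0]
        ring
    have hφζ : φ ζ = p * K ^ (p - 2) * ((p - 1) * ζ - (p - 2) * max (-K) (min ζ K)) := by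
      simp only [hφdef]
      rw [min_eq_right h.le]
    have hζφ : ζ * φ ζ = p * K ^ (p - 2) * ((p - 1) * |ζ| ^ 2 - (p - 2) * (K * |ζ|)) := by
      rw [hφζ, ← hcζ, sq_abs]
      ring
    have hX : 0 ≤ (p - 1) * |ζ| ^ 2 - (p - 2) * (K * |ζ|) := by
      nlinarith [mul_nonneg (show (0 : ℝ) ≤ p - 2 by linarith)
        (mul_nonneg (abs_nonneg ζ) (sub_nonneg.mpr h.le)), sq_nonneg |ζ|]
    have h0 : 0 ≤ ζ * φ ζ := by
      rw [hζφ]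
      exact mul_nonneg (mul_nonneg (by linarith) ht) hX
    rw [abs_of_nonneg h0, hζφ]
    have hsq' : ζ ^ 2 = |ζ| ^ 2 := (sq_abs ζ).symm
    rw [hsq']
    have hpa : (0 : ℝ) ≤ p * ((p - 1) * (p - 2) / 2) :=
      mul_nonneg (by linarith)
        (div_nonneg (mul_nonneg (by linarith) (by linarith)) (by norm_num))
    clear hθ₁ hθ₂ hKdef hsq habs hKp hKp1 hφdef hAdef hBdef hCdef hθK hqK hq hqeq hF key
      heven hodd hd hdθ hφc hcζ hφζ hX h0
    nlinarith [mul_nonneg (mul_nonneg hpa ht) (sq_nonneg (|ζ| - K)), abs_nonneg ζ]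
end

section
/- Let A : ℝ → ℝ be nondecreasing and differentiable, and let η : ℝ → ℝ be differentiable with nondecreasing derivative η' (i.e., η convex). Then for all real numbers a, b, k: η'(b - k)·(A(a) - A(b)) ≤ ∫_k^a η'(σ - k)·A'(σ) dσ - ∫_k^b η'(σ - k)·A'(σ) dσ. -/
open intervalIntegral MeasureTheory Set

lemma deriv_nonneg_of_monotone {A : ℝ → ℝ} (hA : Monotone A) (hA' : Differentiable ℝ A)
    (x : ℝ) : 0 ≤ deriv A x := by
  have h := (hA' x).hasDerivAt
  rw [hasDerivAt_iff_tendsto_slope] at h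
  have h2 : Filter.Tendsto (slope A x) (nhdsWithin x (Ioi x)) (nhds (deriv A x)) :=
    h.mono_left (nhdsWithin_mono _ (fun y hy => ne_of_gt hy))
  refine ge_of_tendsto h2 ?_
  filter_upwards [self_mem_nhdsWithin] with y hy
  rw [slope_def_field]
  exact div_nonneg (sub_nonneg.2 (hA (le_of_lt hy))) (sub_nonneg.2 (le_of_lt hy))

/-- For `A` nondecreasing differentiable and `η` differentiable convex
(`η'` nondecreasing):
`η'(b-k)(A(a)-A(b)) ≤ ∫_k^a η'(σ-k) A'(σ) dσ - ∫_k^b η'(σ-k) A'(σ) dσ`. -/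
theorem convex_weight_inequality (A η : ℝ → ℝ)
    (hA : Monotone A) (hA' : Differentiable ℝ A)
    (hη : Differentiable ℝ η) (hη' : Monotone (deriv η)) (a b k : ℝ) :
    deriv η (b - k) * (A a - A b) ≤
      (∫ σ in k..a, deriv η (σ - k) * deriv A σ) -
      (∫ σ in k..b, deriv η (σ - k) * deriv A σ) := by
  set g : ℝ → ℝ := deriv η with hg
  set f : ℝ → ℝ := fun σ => g (σ - k) * deriv A σ with hf
  have hA'nn : ∀ x, 0 ≤ deriv A x := deriv_nonneg_of_monotone hA hA'
  -- deriv A is interval integrable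
  have hAint : ∀ x y : ℝ, IntervalIntegrable (deriv A) volume x y := fun x y =>
    intervalIntegrable_deriv_of_nonneg hA'.continuous.continuousOn
      (fun t _ => (hA' t).hasDerivAt) (fun t _ => hA'nn t)
  -- measurability of f
  have hgm : Measurable g := hη'.measurable
  have hfm : Measurable f :=
    (hgm.comp (measurable_id.sub_const k)).mul (measurable_deriv A)
  -- f is interval integrable
  have hfint : ∀ x y : ℝ, IntervalIntegrable f volume x y := by
    intro x y
    set C : ℝ := max |g (x - k)| |g (y - k)| with hC
    refine IntervalIntegrable.mono_fun' (g := fun σ => C * deriv A σ)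
      ((hAint x y).const_mul C) hfm.aestronglyMeasurable ?_
    filter_upwards [MeasureTheory.ae_restrict_mem measurableSet_uIoc] with σ hσ
    have h1 : min x y ≤ σ := le_of_lt hσ.1
    have h2 : σ ≤ max x y := hσ.2
    have hb1 : g (min x y - k) ≤ g (σ - k) := hη' (by linarith)
    have hb2 : g (σ - k) ≤ g (max x y - k) := hη' (by linarith)
    have habs : |g (σ - k)| ≤ C := by
      rcases le_total x y with h | h
      · rw [min_eq_left h] at hb1; rw [max_eq_right h] at hb2
        rw [abs_le]; constructor
        · calc -C ≤ -|g (x - k)| := by simp [hC]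
            _ ≤ g (x - k) := neg_abs_le _
            _ ≤ g (σ - k) := hb1
        · calc g (σ - k) ≤ g (y - k) := hb2
            _ ≤ |g (y - k)| := le_abs_self _
            _ ≤ C := le_max_right _ _
      · rw [min_eq_right h] at hb1; rw [max_eq_left h] at hb2
        rw [abs_le]; constructor
        · calc -C ≤ -|g (y - k)| := by simp [hC]
            _ ≤ g (y - k) := neg_abs_le _
            _ ≤ g (σ - k) := hb1
        · calc g (σ - k) ≤ g (x - k) := hb2
            _ ≤ |g (x - k)| := le_abs_self _
            _ ≤ C := le_max_left _ _
    have : ‖f σ‖ = |g (σ - k)| * deriv A σ := by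
      rw [hf]; simp only [Real.norm_eq_abs, abs_mul, abs_of_nonneg (hA'nn σ)]
    rw [this]
    exact mul_le_mul_of_nonneg_right habs (hA'nn σ)
  -- FTC for A
  have hFTC : ∀ x y : ℝ, (∫ σ in x..y, deriv A σ) = A y - A x := fun x y =>
    integral_eq_sub_of_hasDerivAt (fun t _ => (hA' t).hasDerivAt) (hAint x y)
  -- combine the two integrals
  have hsub : (∫ σ in k..a, f σ) - (∫ σ in k..b, f σ) = ∫ σ in b..a, f σ :=
    integral_interval_sub_left (hfint k a) (hfint k b)
  rw [show (∫ σ in k..a, deriv η (σ - k) * deriv A σ) -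
      (∫ σ in k..b, deriv η (σ - k) * deriv A σ) = ∫ σ in b..a, f σ from hsub]
  rcases le_total b a with hba | hab
  · -- b ≤ a
    have hmono : (∫ σ in b..a, g (b - k) * deriv A σ) ≤ ∫ σ in b..a, f σ := by
      refine integral_mono_on hba ((hAint b a).const_mul _) (hfint b a) ?_
      intro σ hσ
      exact mul_le_mul_of_nonneg_right (hη' (by linarith [hσ.1])) (hA'nn σ)
    calc deriv η (b - k) * (A a - A b) = g (b - k) * ∫ σ in b..a, deriv A σ := by
          rw [hFTC b a]
      _ = ∫ σ in b..a, g (b - k) * deriv A σ := (intervalIntegral.integral_const_mul _ _).symm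
      _ ≤ ∫ σ in b..a, f σ := hmono
  · -- a ≤ b
    have hmono : (∫ σ in a..b, f σ) ≤ ∫ σ in a..b, g (b - k) * deriv A σ := by
      refine integral_mono_on hab (hfint a b) ((hAint a b).const_mul _) ?_
      intro σ hσ
      exact mul_le_mul_of_nonneg_right (hη' (by linarith [hσ.2])) (hA'nn σ)
    have h1 : (∫ σ in a..b, g (b - k) * deriv A σ) = g (b - k) * (A b - A a) := by
      rw [intervalIntegral.integral_const_mul, hFTC a b]
    rw [integral_symm a b]
    have := hmono
    rw [h1] at this
    linarith
end

section
/- Let A : ℝ → ℝ be a nondecreasing C¹ function and let φ : ℝ → ℝ be C². Then for all real numbers a and b: φ'(b)·(A(a) - A(b)) = ∫_ℝ A'(ζ)·φ'(ζ)·(1_{ζ < a} - 1_{ζ < b}) dζ - ∫_ℝ φ''(ζ)·|A(a) - A(ζ)|·1_{(min(a,b), max(a,b))}(ζ) dζ. -/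
open MeasureTheory Set

/-- Taylor identity: for `A` nondecreasing `C¹` and `φ` `C²`,
`φ'(b)(A(a)-A(b)) = ∫ A'(ζ)φ'(ζ)(1_{ζ<a} - 1_{ζ<b}) dζ
  - ∫ φ''(ζ)|A(a)-A(ζ)| 1_{(min a b, max a b)}(ζ) dζ`. -/
theorem taylor_identity (A φ : ℝ → ℝ)
    (hA : ContDiff ℝ 1 A) (hAmono : Monotone A) (hφ : ContDiff ℝ 2 φ)
    (a b : ℝ) :
    deriv φ b * (A a - A b) =
      (∫ ζ : ℝ, deriv A ζ * deriv φ ζ *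
          (Set.indicator {ζ : ℝ | ζ < a} (fun _ => (1 : ℝ)) ζ -
            Set.indicator {ζ : ℝ | ζ < b} (fun _ => (1 : ℝ)) ζ)) -
      ∫ ζ : ℝ, deriv (deriv φ) ζ * |A a - A ζ| *
          Set.indicator (Set.Ioo (min a b) (max a b)) (fun _ => (1 : ℝ)) ζ := by
  have hφ1 : ContDiff ℝ 1 (deriv φ) := by
    have := (contDiff_succ_iff_deriv (n := 1)).1 (by exact_mod_cast hφ)
    exact this.2.2
  have hφd : Differentiable ℝ φ := hφ.differentiable two_ne_zero
  have hφ'd : Differentiable ℝ (deriv φ) := hφ1.differentiable one_ne_zero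
  have hAd : Differentiable ℝ A := hA.differentiable one_ne_zero
  have hA'c : Continuous (deriv A) := hA.continuous_deriv le_rfl
  have hφ'c : Continuous (deriv φ) := hφ1.continuous
  have hφ''c : Continuous (deriv (deriv φ)) := hφ1.continuous_deriv le_rfl
  set f : ℝ → ℝ := fun ζ => deriv A ζ * deriv φ ζ with hf
  set h : ℝ → ℝ := fun ζ => deriv (deriv φ) ζ * (A a - A ζ) with hh
  have hfc : Continuous f := hA'c.mul hφ'c
  have hhc : Continuous h := hφ''c.mul (continuous_const.sub hAd.continuous)
  -- FTC for g ζ = φ' ζ * (A a - A ζ)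
  have key : (∫ ζ in b..a, (f ζ - h ζ)) = deriv φ b * (A a - A b) := by
    have hder : ∀ ζ : ℝ, HasDerivAt (fun t => deriv φ t * (A a - A t))
        (h ζ - f ζ) ζ := by
      intro ζ
      have h1 : HasDerivAt (deriv φ) (deriv (deriv φ) ζ) ζ :=
        (hφ'd ζ).hasDerivAt
      have h2 : HasDerivAt (fun t => A a - A t) (-(deriv A ζ)) ζ := by
        exact ((hasDerivAt_const ζ (A a)).sub (hAd ζ).hasDerivAt).congr_deriv (zero_sub _)
      have : HasDerivAt (fun t => deriv φ t * (A a - A t))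
          (deriv (deriv φ) ζ * (A a - A ζ) + deriv φ ζ * -deriv A ζ) ζ := h1.mul h2
      convert this using 1
      show deriv (deriv φ) ζ * (A a - A ζ) - deriv A ζ * deriv φ ζ = _; ring
    have hint : IntervalIntegrable (fun ζ => h ζ - f ζ) volume b a :=
      (hhc.sub hfc).intervalIntegrable b a
    have := intervalIntegral.integral_eq_sub_of_hasDerivAt
      (fun ζ _ => hder ζ) hint
    have h0 : (∫ ζ in b..a, (h ζ - f ζ)) = - (deriv φ b * (A a - A b)) := by
      rw [this]; ring_nf
    have : (∫ ζ in b..a, (f ζ - h ζ)) = - ∫ ζ in b..a, (h ζ - f ζ) := by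
      rw [← intervalIntegral.integral_neg]; congr 1; ext ζ; ring
    rw [this, h0]; ring
  have hfint : IntervalIntegrable f volume b a := hfc.intervalIntegrable b a
  have hhint : IntervalIntegrable h volume b a := hhc.intervalIntegrable b a
  have hsplit : (∫ ζ in b..a, (f ζ - h ζ)) =
      (∫ ζ in b..a, f ζ) - ∫ ζ in b..a, h ζ :=
    intervalIntegral.integral_sub hfint hhint
  -- first integral
  have I1 : (∫ ζ : ℝ, deriv A ζ * deriv φ ζ *
          (Set.indicator {ζ : ℝ | ζ < a} (fun _ => (1 : ℝ)) ζ -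
            Set.indicator {ζ : ℝ | ζ < b} (fun _ => (1 : ℝ)) ζ)) =
      ∫ ζ in b..a, f ζ := by
    have hpt : ∀ ζ : ℝ, deriv A ζ * deriv φ ζ *
          (Set.indicator {ζ : ℝ | ζ < a} (fun _ => (1 : ℝ)) ζ -
            Set.indicator {ζ : ℝ | ζ < b} (fun _ => (1 : ℝ)) ζ) =
        Set.indicator (Set.Ico b a) f ζ - Set.indicator (Set.Ico a b) f ζ := by
      intro ζ
      by_cases h1 : ζ < a <;> by_cases h2 : ζ < b <;>
        simp [Set.indicator_apply, h1, h2, not_lt.1, le_of_not_gt, hf]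
    calc (∫ ζ : ℝ, deriv A ζ * deriv φ ζ *
          (Set.indicator {ζ : ℝ | ζ < a} (fun _ => (1 : ℝ)) ζ -
            Set.indicator {ζ : ℝ | ζ < b} (fun _ => (1 : ℝ)) ζ))
        = ∫ ζ : ℝ, (Set.indicator (Set.Ico b a) f ζ - Set.indicator (Set.Ico a b) f ζ) := by
          exact integral_congr_ae (Filter.Eventually.of_forall hpt)
      _ = (∫ ζ : ℝ, Set.indicator (Set.Ico b a) f ζ) -
            ∫ ζ : ℝ, Set.indicator (Set.Ico a b) f ζ := by
          apply integral_sub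
          · exact ((hfc.integrableOn_Icc.mono_set Set.Ico_subset_Icc_self).integrable_indicator
              measurableSet_Ico)
          · exact ((hfc.integrableOn_Icc.mono_set Set.Ico_subset_Icc_self).integrable_indicator
              measurableSet_Ico)
      _ = (∫ ζ in Set.Ico b a, f ζ) - ∫ ζ in Set.Ico a b, f ζ := by
          rw [integral_indicator measurableSet_Ico, integral_indicator measurableSet_Ico]
      _ = (∫ ζ in Set.Ioc b a, f ζ) - ∫ ζ in Set.Ioc a b, f ζ := by
          rw [integral_Ico_eq_integral_Ioo, integral_Ioc_eq_integral_Ioo,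
            integral_Ico_eq_integral_Ioo, integral_Ioc_eq_integral_Ioo]
      _ = ∫ ζ in b..a, f ζ := rfl
  -- second integral
  have I2 : (∫ ζ : ℝ, deriv (deriv φ) ζ * |A a - A ζ| *
          Set.indicator (Set.Ioo (min a b) (max a b)) (fun _ => (1 : ℝ)) ζ) =
      ∫ ζ in b..a, h ζ := by
    have habs : (∫ ζ : ℝ, deriv (deriv φ) ζ * |A a - A ζ| *
          Set.indicator (Set.Ioo (min a b) (max a b)) (fun _ => (1 : ℝ)) ζ) =
        ∫ ζ in Set.Ioo (min a b) (max a b), deriv (deriv φ) ζ * |A a - A ζ| := by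
      rw [← integral_indicator measurableSet_Ioo]
      congr 1; ext ζ
      by_cases hm : ζ ∈ Set.Ioo (min a b) (max a b) <;>
        simp [Set.indicator_apply, hm]
    rw [habs]
    rcases le_total b a with hba | hab
    · rw [min_eq_right hba, max_eq_left hba]
      have : ∀ ζ ∈ Set.Ioo b a, deriv (deriv φ) ζ * |A a - A ζ| = h ζ := by
        intro ζ hζ
        rw [abs_of_nonneg (sub_nonneg.2 (hAmono hζ.2.le))]
      rw [setIntegral_congr_fun measurableSet_Ioo this,
        intervalIntegral.integral_of_le hba, integral_Ioc_eq_integral_Ioo]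
    · rw [min_eq_left hab, max_eq_right hab]
      have : ∀ ζ ∈ Set.Ioo a b, deriv (deriv φ) ζ * |A a - A ζ| = -h ζ := by
        intro ζ hζ
        rw [abs_of_nonpos (sub_nonpos.2 (hAmono hζ.1.le))]
        simp [hh]; ring
      rw [setIntegral_congr_fun measurableSet_Ioo this, integral_neg,
        intervalIntegral.integral_of_ge hab, integral_Ioc_eq_integral_Ioo]
  rw [I1, I2, ← hsplit, key]
end

section
/- Let T > 0, M ≥ 0, and let (h_n)_{n ≥ 0} be a sequence of nonnegative continuous functions on [0,T] such that h_0(t) ≤ M for all t, h_n(0) → 0 as n → ∞, and h_n(t) ≤ (1/2)·∫_0^t h_{n-1}(s) ds + h_{n-1}(0) for all n ≥ 1, t ∈ [0,T]. Then sup_{t ∈ [0,T]} h_n(t) → 0 as n → ∞. -/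
open MeasureTheory Filter intervalIntegral

open Finset

lemma conv_tendsto_zero (a b : ℕ → ℝ) (ha0 : ∀ n, 0 ≤ a n) (hb0 : ∀ n, 0 ≤ b n)
    (ha : Tendsto a atTop (nhds 0)) (hb : Summable b) :
    Tendsto (fun n => ∑ j ∈ Finset.range n, a (n - 1 - j) * b j) atTop (nhds 0) := by
  obtain ⟨A, hA⟩ := ha.bddAbove_range
  have hA' : ∀ n, a n ≤ A := fun n => hA (Set.mem_range_self n)
  have hA0 : 0 ≤ A := le_trans (ha0 0) (hA' 0)
  set S := ∑' j, b j with hS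
  have hS0 : 0 ≤ S := tsum_nonneg hb0
  have hpartial : Tendsto (fun n => ∑ j ∈ range n, b j) atTop (nhds S) :=
    hb.hasSum.tendsto_sum_nat
  have hple : ∀ n, ∑ j ∈ range n, b j ≤ S := fun n => Summable.sum_le_tsum _ (fun i _ => hb0 i) hb
  rw [Metric.tendsto_atTop]
  intro ε hε
  have hδ1 : 0 < ε / (2 * (A + 1)) := by positivity
  have hδ2 : 0 < ε / (2 * (S + 1)) := by positivity
  -- choose N1 with tail small
  have h1 : ∀ᶠ n in atTop, S - ε / (2 * (A + 1)) < ∑ j ∈ range n, b j :=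
    hpartial.eventually (eventually_gt_nhds (by linarith))
  obtain ⟨N1, hN1⟩ := h1.exists
  -- choose N2 with a small
  have h2 : ∀ᶠ n in atTop, a n < ε / (2 * (S + 1)) := by
    have := ha.eventually (eventually_lt_nhds hδ2)
    simpa using this
  obtain ⟨N2, hN2⟩ := (eventually_atTop.1 h2)
  refine ⟨N1 + N2 + 1, fun n hn => ?_⟩
  have hN1n : N1 ≤ n := by omega
  have hsplit : ∑ j ∈ range n, a (n - 1 - j) * b j =
      ∑ j ∈ range N1, a (n - 1 - j) * b j + ∑ j ∈ Ico N1 n, a (n - 1 - j) * b j := by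
    rw [range_eq_Ico, range_eq_Ico]
    exact (sum_Ico_consecutive _ (Nat.zero_le _) hN1n).symm
  have hpart1 : ∑ j ∈ range N1, a (n - 1 - j) * b j ≤ ε / (2 * (S + 1)) * S := by
    calc ∑ j ∈ range N1, a (n - 1 - j) * b j
        ≤ ∑ j ∈ range N1, ε / (2 * (S + 1)) * b j := by
          refine sum_le_sum fun j hj => ?_
          have hj' : j < N1 := mem_range.1 hj
          have : N2 ≤ n - 1 - j := by omega
          exact mul_le_mul_of_nonneg_right (le_of_lt (hN2 _ this)) (hb0 j)
      _ = ε / (2 * (S + 1)) * ∑ j ∈ range N1, b j := by rw [mul_sum]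
      _ ≤ ε / (2 * (S + 1)) * S := mul_le_mul_of_nonneg_left (hple N1) hδ2.le
  have hpart2 : ∑ j ∈ Ico N1 n, a (n - 1 - j) * b j ≤ A * (ε / (2 * (A + 1))) := by
    calc ∑ j ∈ Ico N1 n, a (n - 1 - j) * b j
        ≤ ∑ j ∈ Ico N1 n, A * b j :=
          sum_le_sum fun j _ => mul_le_mul_of_nonneg_right (hA' _) (hb0 j)
      _ = A * (∑ j ∈ range n, b j - ∑ j ∈ range N1, b j) := by
          rw [← Finset.mul_sum, range_eq_Ico,
            ← sum_Ico_consecutive b (Nat.zero_le N1) hN1n, range_eq_Ico]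
          ring
      _ ≤ A * (ε / (2 * (A + 1))) := by
          refine mul_le_mul_of_nonneg_left ?_ hA0
          have := hple n
          linarith
  have hnn : 0 ≤ ∑ j ∈ range n, a (n - 1 - j) * b j :=
    sum_nonneg fun j _ => mul_nonneg (ha0 _) (hb0 j)
  rw [Real.dist_eq, sub_zero, abs_of_nonneg hnn]
  have e1 : ε / (2 * (S + 1)) * S < ε / 2 := by
    rw [div_mul_eq_mul_div, div_lt_div_iff₀ (by positivity) (by norm_num)]
    nlinarith
  have e2 : A * (ε / (2 * (A + 1))) ≤ ε / 2 := by
    rw [mul_div_assoc']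
    rw [div_le_div_iff₀ (by positivity) (by norm_num)]
    nlinarith
  calc ∑ j ∈ range n, a (n - 1 - j) * b j
      ≤ ε / (2 * (S + 1)) * S + A * (ε / (2 * (A + 1))) := by
        rw [hsplit]; exact add_le_add hpart1 hpart2
    _ < ε := by linarith



/-- Gronwall-type iteration: if `h_n(t) ≤ (1/2)∫_0^t h_{n-1} + h_{n-1}(0)`, `h_0 ≤ M`
on `[0,T]` and `h_n(0) → 0`, then `sup_{[0,T]} h_n → 0`. -/
theorem sup_tendsto_zero_of_iteration
    (T M : ℝ) (hT : 0 < T) (h : ℕ → ℝ → ℝ)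
    (hcont : ∀ n, ContinuousOn (h n) (Set.Icc 0 T))
    (hnonneg : ∀ n, ∀ t ∈ Set.Icc (0 : ℝ) T, 0 ≤ h n t)
    (hM : ∀ t ∈ Set.Icc (0 : ℝ) T, h 0 t ≤ M)
    (h0 : Tendsto (fun n => h n 0) atTop (nhds 0))
    (hrec : ∀ n : ℕ, 1 ≤ n → ∀ t ∈ Set.Icc (0 : ℝ) T,
      h n t ≤ (1 / 2) * (∫ s in (0:ℝ)..t, h (n - 1) s) + h (n - 1) 0) :
    Tendsto (fun n => ⨆ t : Set.Icc (0 : ℝ) T, h n t) atTop (nhds 0) := by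
  have hMem0 : (0:ℝ) ∈ Set.Icc (0:ℝ) T := ⟨le_refl _, hT.le⟩
  have hM0 : 0 ≤ M := le_trans (hnonneg 0 0 hMem0) (hM 0 hMem0)
  set a : ℕ → ℝ := fun k => h k 0 with ha_def
  have ha0 : ∀ k, 0 ≤ a k := fun k => hnonneg k 0 hMem0
  -- pointwise bound
  have key : ∀ n, ∀ t ∈ Set.Icc (0:ℝ) T,
      h n t ≤ (M / (2^n * n.factorial)) * t^n +
        ∑ j ∈ range n, (a (n - 1 - j) / (2^j * j.factorial)) * t^j := by
    intro n
    induction n with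
    | zero => intro t ht; simpa using hM t ht
    | succ n ih =>
      intro t ht
      have ht0 : 0 ≤ t := ht.1
      have htT : t ≤ T := ht.2
      have hsub : Set.uIcc (0:ℝ) t ⊆ Set.Icc 0 T := by
        rw [Set.uIcc_of_le ht0]; exact Set.Icc_subset_Icc le_rfl htT
      have hInt : IntervalIntegrable (h n) volume 0 t :=
        ((hcont n).mono hsub).intervalIntegrable
      set B : ℝ → ℝ := fun s => (M / (2^n * n.factorial)) * s^n +
        ∑ j ∈ range n, (a (n - 1 - j) / (2^j * j.factorial)) * s^j with hB_def
      have hBcont : Continuous B := by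
        apply Continuous.add
        · exact continuous_const.mul (continuous_pow n)
        · exact continuous_finset_sum _ fun j _ => continuous_const.mul (continuous_pow j)
      have hBint : IntervalIntegrable B volume 0 t := hBcont.intervalIntegrable 0 t
      have hmono : ∫ s in (0:ℝ)..t, h n s ≤ ∫ s in (0:ℝ)..t, B s :=
        integral_mono_on ht0 hInt hBint
          (fun s hs => ih s ⟨hs.1, hs.2.trans htT⟩)
      have hval : ∫ s in (0:ℝ)..t, B s =
          (M / (2^n * n.factorial)) * (t^(n+1) / (n+1)) +
          ∑ j ∈ range n, (a (n - 1 - j) / (2^j * j.factorial)) * (t^(j+1) / (j+1)) := by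
        rw [hB_def]
        beta_reduce
        rw [integral_add (f := fun s => M / (2^n * (n.factorial:ℝ)) * s^n)
          (g := fun s => ∑ j ∈ range n, (a (n - 1 - j) / (2^j * (j.factorial:ℝ))) * s^j) ((continuous_const.mul (continuous_pow n)).intervalIntegrable 0 t)
          ((continuous_finset_sum _ fun j _ =>
            continuous_const.mul (continuous_pow j)).intervalIntegrable 0 t)]
        rw [intervalIntegral.integral_const_mul, integral_pow]
        rw [intervalIntegral.integral_finset_sum
          (f := fun j s => (a (n - 1 - j) / (2^j * (j.factorial:ℝ))) * s^j) (fun j _ => (continuous_const.mul (continuous_pow j)).intervalIntegrable 0 t)]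
        congr 1
        · congr 1; push_cast; ring_nf
        · refine Finset.sum_congr rfl fun j _ => ?_
          rw [intervalIntegral.integral_const_mul, integral_pow]
          congr 1; push_cast; ring_nf
      have hr := hrec (n+1) (by omega) t ht
      simp only [Nat.add_sub_cancel] at hr
      have step : h (n+1) t ≤ (1/2) * (∫ s in (0:ℝ)..t, B s) + a n := by
        refine hr.trans (add_le_add_left ?_ _)
        exact mul_le_mul_of_nonneg_left hmono (by norm_num)
      refine step.trans (le_of_eq ?_)
      simp only [Nat.add_sub_cancel]
      rw [hval, Finset.sum_range_succ' (fun j => (a (n - j) / (2^j * j.factorial)) * t^j) n]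
      have hfact : ∀ j : ℕ, ((j+1).factorial : ℝ) = (j+1) * j.factorial := by
        intro j; push_cast [Nat.factorial_succ]; ring
      have hterm : ∀ j ∈ range n,
          (1/2) * ((a (n - 1 - j) / (2^j * j.factorial)) * (t^(j+1) / (j+1))) =
          (a (n - (j+1)) / (2^(j+1) * (j+1).factorial)) * t^(j+1) := by
        intro j _
        have : n - (j+1) = n - 1 - j := by omega
        rw [this, hfact j, pow_succ]
        have h1 : ((j:ℝ)+1) ≠ 0 := by positivity
        have h2 : (2:ℝ)^j ≠ 0 := by positivity
        have h3 : ((j.factorial:ℝ)) ≠ 0 := by exact_mod_cast Nat.factorial_ne_zero j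
        field_simp
        ring_nf
      rw [mul_add, mul_sum, Finset.sum_congr rfl hterm]
      simp only [pow_zero, Nat.factorial_zero, Nat.cast_one, mul_one, Nat.sub_zero]
      rw [hfact n, pow_succ]
      have hMco : 1/2 * (M / (2 ^ n * (n.factorial:ℝ)) * (t ^ n * t / ((n:ℝ) + 1))) =
          M / (2^(n+1) * (((n:ℝ) + 1) * (n.factorial:ℝ))) * (t ^ n * t) := by
        have h1 : ((n:ℝ)+1) ≠ 0 := by positivity
        have h2 : (2:ℝ)^n ≠ 0 := by positivity
        have h3 : ((n.factorial:ℝ)) ≠ 0 := by exact_mod_cast Nat.factorial_ne_zero n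
        field_simp
        ring_nf
      linarith [hMco]
  -- sup bound
  set U : ℕ → ℝ := fun n => M * ((T/2)^n / n.factorial) +
    ∑ j ∈ range n, a (n - 1 - j) * ((T/2)^j / j.factorial) with hU_def
  have hsupU : ∀ n, ∀ t ∈ Set.Icc (0:ℝ) T, h n t ≤ U n := by
    intro n t ht
    refine (key n t ht).trans ?_
    have hTt : ∀ j : ℕ, t^j ≤ T^j := fun j => pow_le_pow_left₀ ht.1 ht.2 j
    have e : ∀ (c : ℝ) (j : ℕ), 0 ≤ c → (c / (2^j * j.factorial)) * t^j ≤ c * ((T/2)^j / j.factorial) := by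
      intro c j hc
      have : c * ((T/2)^j / j.factorial) = (c / (2^j * j.factorial)) * T^j := by
        rw [div_pow]
        ring
      rw [this]
      exact mul_le_mul_of_nonneg_left (hTt j) (by positivity)
    exact add_le_add (e M n hM0) (Finset.sum_le_sum fun j _ => e _ j (ha0 _))
  have hUtend : Tendsto U atTop (nhds 0) := by
    rw [hU_def]
    have h1 : Tendsto (fun n => M * ((T/2)^n / n.factorial)) atTop (nhds 0) := by
      simpa using (FloorSemiring.tendsto_pow_div_factorial_atTop (T/2)).const_mul M
    have h2 : Tendsto (fun n => ∑ j ∈ range n, a (n - 1 - j) * ((T/2)^j / j.factorial))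
        atTop (nhds 0) := by
      refine conv_tendsto_zero a (fun j => (T/2)^j / j.factorial) ha0
        (fun j => by positivity) h0 (Real.summable_pow_div_factorial (T/2))
    simpa using h1.add h2
  haveI : Nonempty (Set.Icc (0:ℝ) T) := ⟨⟨0, hMem0⟩⟩
  refine squeeze_zero (fun n => ?_) (fun n => ?_) hUtend
  · have hbdd : BddAbove (Set.range fun t : Set.Icc (0:ℝ) T => h n t) := by
      refine ⟨U n, ?_⟩
      rintro x ⟨t, rfl⟩
      exact hsupU n t t.2
    exact le_trans (ha0 n) (le_ciSup hbdd ⟨0, hMem0⟩)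
  · exact ciSup_le fun t => hsupU n t t.2
end

section
/- Let f : X × ℝ → [0,1] be such that for each x ∈ X, ζ ↦ f(x, ζ) is nonincreasing, right-continuous, with limit 1 as ζ → −∞ and limit 0 as ζ → +∞ (a kinetic function pointwise in x). If for some x the function ζ ↦ f(x,ζ)·(1 − f(x,ζ)) is zero for Lebesgue-almost every ζ ∈ ℝ, then there exists u ∈ ℝ such that f(x, ζ) = 1_{u > ζ} for almost every ζ ∈ ℝ; moreover u = ∫_ℝ (f(x,ζ) − 1_{0 > ζ}) dζ. -/
open MeasureTheory Filter Set

lemma indicator_diff_eq_pos (u : ℝ) (hu0 : 0 ≤ u) :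
    (fun ζ : ℝ => Set.indicator {ζ' : ℝ | ζ' < u} (fun _ => (1 : ℝ)) ζ
        - Set.indicator {ζ' : ℝ | ζ' < 0} (fun _ => (1 : ℝ)) ζ)
      = Set.indicator (Set.Ico 0 u) (fun _ => (1:ℝ)) := by
  funext ζ
  simp only [Set.indicator_apply, Set.mem_setOf_eq, Set.mem_Ico]
  split_ifs <;> simp_all <;> linarith

lemma indicator_diff_eq_neg (u : ℝ) (hu0 : u < 0) :
    (fun ζ : ℝ => Set.indicator {ζ' : ℝ | ζ' < u} (fun _ => (1 : ℝ)) ζ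
        - Set.indicator {ζ' : ℝ | ζ' < 0} (fun _ => (1 : ℝ)) ζ)
      = (fun ζ => -(Set.indicator (Set.Ico u 0) (fun _ => (1:ℝ)) ζ)) := by
  funext ζ
  simp only [Set.indicator_apply, Set.mem_setOf_eq, Set.mem_Ico]
  split_ifs <;> simp_all <;> linarith

/-- A kinetic function which takes values in `{0,1}` a.e. is an equilibrium:
there is `u` with `f(x,·) = 1_{u > ·}` a.e., and `u = ∫ (f(x,ζ) - 1_{0>ζ}) dζ`. -/
theorem kinetic_function_equilibrium {X : Type*} (f : X × ℝ → ℝ)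
    (hrange : ∀ x ζ, 0 ≤ f (x, ζ) ∧ f (x, ζ) ≤ 1)
    (hanti : ∀ x : X, Antitone (fun ζ => f (x, ζ)))
    (hrc : ∀ (x : X) (ζ : ℝ), ContinuousWithinAt (fun ζ' => f (x, ζ')) (Set.Ici ζ) ζ)
    (hbot : ∀ x : X, Tendsto (fun ζ => f (x, ζ)) atBot (nhds 1))
    (htop : ∀ x : X, Tendsto (fun ζ => f (x, ζ)) atTop (nhds 0))
    (x : X)
    (hx : ∀ᵐ ζ : ℝ, f (x, ζ) * (1 - f (x, ζ)) = 0) :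
    ∃ u : ℝ,
      (∀ᵐ ζ : ℝ, f (x, ζ) = Set.indicator {ζ' : ℝ | ζ' < u} (fun _ => (1 : ℝ)) ζ) ∧
      u = ∫ ζ : ℝ, (f (x, ζ) - Set.indicator {ζ' : ℝ | ζ' < 0} (fun _ => (1 : ℝ)) ζ) := by
  classical
  set S : Set ℝ := {ζ | 1/2 ≤ f (x, ζ)} with hS
  have hne : S.Nonempty := by
    obtain ⟨ζ, hζ⟩ := ((hbot x).eventually (lt_mem_nhds (by norm_num : (1/2:ℝ) < 1))).exists
    exact ⟨ζ, le_of_lt hζ⟩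
  have hbdd : BddAbove S := by
    obtain ⟨a, ha⟩ := eventually_atTop.mp
      ((htop x).eventually (gt_mem_nhds (by norm_num : (0:ℝ) < 1/2)))
    refine ⟨a, fun s hs => ?_⟩
    by_contra h
    exact absurd hs (not_le.mpr (ha s (le_of_lt (not_le.mp h))))
  set u : ℝ := sSup S with hu
  have hne' : ∀ᵐ ζ : ℝ, ζ ≠ u := by
    rw [ae_iff]
    simp
  have key : ∀ᵐ ζ : ℝ, f (x, ζ) = Set.indicator {ζ' : ℝ | ζ' < u} (fun _ => (1 : ℝ)) ζ := by
    filter_upwards [hx, hne'] with ζ h1 h2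
    rcases lt_trichotomy ζ u with hlt | heq | hgt
    · obtain ⟨s, hsS, hζs⟩ := exists_lt_of_lt_csSup hne hlt
      have h12 : (1/2:ℝ) ≤ f (x, ζ) := le_trans hsS (hanti x hζs.le)
      have hf0 : f (x, ζ) ≠ 0 := by linarith
      have : 1 - f (x, ζ) = 0 := by
        rcases mul_eq_zero.mp h1 with h | h
        · exact absurd h hf0
        · exact h
      have : f (x, ζ) = 1 := by linarith
      rw [this]
      exact (Set.indicator_of_mem (show ζ ∈ {ζ' : ℝ | ζ' < u} from hlt) (fun _ => (1:ℝ))).symm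
    · exact absurd heq h2
    · have hζS : ζ ∉ S := fun h => absurd (le_csSup hbdd h) (not_le.mpr hgt)
      have h12 : f (x, ζ) < 1/2 := not_le.mp hζS
      have hf1 : (1:ℝ) - f (x, ζ) ≠ 0 := by linarith
      have : f (x, ζ) = 0 := by
        rcases mul_eq_zero.mp h1 with h | h
        · exact h
        · exact absurd h hf1
      rw [this, Set.indicator_of_notMem (by simpa using hgt.not_gt)]
  refine ⟨u, key, ?_⟩
  have hcongr : (∫ ζ : ℝ, (f (x, ζ) - Set.indicator {ζ' : ℝ | ζ' < 0} (fun _ => (1 : ℝ)) ζ))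
      = ∫ ζ : ℝ, (Set.indicator {ζ' : ℝ | ζ' < u} (fun _ => (1 : ℝ)) ζ
          - Set.indicator {ζ' : ℝ | ζ' < 0} (fun _ => (1 : ℝ)) ζ) := by
    refine integral_congr_ae ?_
    filter_upwards [key] with ζ h
    rw [h]
  rw [hcongr]
  rcases le_or_gt 0 u with hu0 | hu0
  · rw [indicator_diff_eq_pos u hu0]
    rw [show (Set.indicator (Set.Ico 0 u) (fun _ => (1:ℝ))) = (Set.indicator (Set.Ico 0 u) 1) from rfl]
    rw [MeasureTheory.integral_indicator_one measurableSet_Ico, measureReal_def, Real.volume_Ico]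
    rw [ENNReal.toReal_ofReal (by linarith)]
    ring
  · rw [indicator_diff_eq_neg u hu0, integral_neg]
    rw [show (Set.indicator (Set.Ico u 0) (fun _ => (1:ℝ))) = (Set.indicator (Set.Ico u 0) 1) from rfl]
    rw [MeasureTheory.integral_indicator_one measurableSet_Ico, measureReal_def, Real.volume_Ico]
    rw [ENNReal.toReal_ofReal (by linarith)]
    ring
end
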